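/- Let A = a + bi + cj + dk be a nonzero quaternion and define φ : ℍ → ℍ by φ(X) = A⁻¹ · X̄ · A, where X̄ is the quaternion conjugate. Then φ is an involution (i.e., φ∘φ = id) if and only if either b = c = d = 0 or a = 0. If b = c = d = 0, then φ equals quaternion conjugation and its fixed subspace {X ∈ ℍ ∣ φ(X) = X} has real dimension 1; if a = 0, the fixed subspace {X ∈ ℍ ∣ φ(X) = X} has real dimension 3. -/

import Mathlib

set_option maxHeartbeats 1000000 in
/-- For a nonzero quaternion `A = a + bi + cj + dk`, the map `φ(X) = A⁻¹ · X̄ · A` is an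
involution iff `b = c = d = 0` or `a = 0`.  If `b = c = d = 0` then `φ` is quaternion
conjugation and its fixed subspace has real dimension 1; if `a = 0` the fixed subspace
has real dimension 3. -/
theorem stmt13 (A : Quaternion ℝ) (hA : A ≠ 0) :
    ((∀ X : Quaternion ℝ, A⁻¹ * star (A⁻¹ * star X * A) * A = X) ↔
      ((A.imI = 0 ∧ A.imJ = 0 ∧ A.imK = 0) ∨ A.re = 0)) ∧
    ((A.imI = 0 ∧ A.imJ = 0 ∧ A.imK = 0) →
      (∀ X : Quaternion ℝ, A⁻¹ * star X * A = star X) ∧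
      ∃ S : Submodule ℝ (Quaternion ℝ),
        (S : Set (Quaternion ℝ)) = {X : Quaternion ℝ | A⁻¹ * star X * A = X} ∧
        Module.finrank ℝ S = 1) ∧
    (A.re = 0 →
      ∃ S : Submodule ℝ (Quaternion ℝ),
        (S : Set (Quaternion ℝ)) = {X : Quaternion ℝ | A⁻¹ * star X * A = X} ∧
        Module.finrank ℝ S = 3) := by
  have hn : Quaternion.normSq A ≠ 0 := Quaternion.normSq_ne_zero.mpr hA
  have cancel : ∀ W X : Quaternion ℝ, A⁻¹ * W * A = X ↔ W * A = A * X := by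
    intro W X
    constructor
    · intro h
      calc W * A = A * (A⁻¹ * W * A) := by
            rw [← mul_assoc, ← mul_assoc, mul_inv_cancel₀ hA, one_mul]
        _ = A * X := by rw [h]
    · intro h
      calc A⁻¹ * W * A = A⁻¹ * (W * A) := by rw [mul_assoc]
        _ = A⁻¹ * (A * X) := by rw [h]
        _ = X := by rw [← mul_assoc, inv_mul_cancel₀ hA, one_mul]
  have hsAinv : star (A⁻¹) = (Quaternion.normSq A)⁻¹ • A := by
    ext <;> simp [Quaternion.inv_def]
  have main : ∀ X : Quaternion ℝ, (A⁻¹ * star (A⁻¹ * star X * A) * A = X) ↔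
      star A * (X * A) * A = Quaternion.normSq A • (A * X) := by
    intro X
    rw [cancel, star_mul, star_mul, star_star, hsAinv]
    simp only [mul_smul_comm, smul_mul_assoc]
    rw [inv_smul_eq_iff₀ hn, mul_assoc]
  refine ⟨?_, ?_, ?_⟩
  · constructor
    · intro h
      by_cases ha : A.re = 0
      · exact Or.inr ha
      left
      have hI := (main ⟨0, 1, 0, 0⟩).mp (h _)
      have hJ := (main ⟨0, 0, 1, 0⟩).mp (h _)
      have eI := congrArg QuaternionAlgebra.imI hI
      have eJ := congrArg QuaternionAlgebra.imJ hJ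
      simp only [Quaternion.re_mul, Quaternion.imI_mul, Quaternion.imJ_mul, Quaternion.imK_mul,
        Quaternion.re_star, Quaternion.imI_star, Quaternion.imJ_star, Quaternion.imK_star,
        Quaternion.imI_smul, Quaternion.imJ_smul, Quaternion.normSq_def', smul_eq_mul,
        Quaternion.re_mul (⟨0, 1, 0, 0⟩ : Quaternion ℝ), Quaternion.imI_mul (⟨0, 1, 0, 0⟩ : Quaternion ℝ), Quaternion.imJ_mul (⟨0, 1, 0, 0⟩ : Quaternion ℝ), Quaternion.imK_mul (⟨0, 1, 0, 0⟩ : Quaternion ℝ), Quaternion.re_mul (⟨0, 0, 1, 0⟩ : Quaternion ℝ), Quaternion.imI_mul (⟨0, 0, 1, 0⟩ : Quaternion ℝ), Quaternion.imJ_mul (⟨0, 0, 1, 0⟩ : Quaternion ℝ), Quaternion.imK_mul (⟨0, 0, 1, 0⟩ : Quaternion ℝ),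
        Quaternion.imI_mul _ (⟨0, 1, 0, 0⟩ : Quaternion ℝ), Quaternion.imJ_mul _ (⟨0, 0, 1, 0⟩ : Quaternion ℝ)] at eI eJ
      ring_nf at eI eJ
      have e1 : A.re * (A.imJ ^ 2 + A.imK ^ 2) = 0 := by linear_combination (-1/4 : ℝ) * eI
      have e2 : A.re * (A.imI ^ 2 + A.imK ^ 2) = 0 := by linear_combination (-1/4 : ℝ) * eJ
      have h1 := (mul_eq_zero.mp e1).resolve_left ha
      have h2 := (mul_eq_zero.mp e2).resolve_left ha
      refine ⟨?_, ?_, ?_⟩ <;>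
        refine pow_eq_zero_iff two_ne_zero |>.mp ?_ <;>
          nlinarith [sq_nonneg A.imI, sq_nonneg A.imJ, sq_nonneg A.imK]
    · intro h X
      rw [main X]
      rcases h with ⟨hb, hc, hd⟩ | ha
      · ext <;>
          simp only [Quaternion.re_mul, Quaternion.imI_mul, Quaternion.imJ_mul, Quaternion.imK_mul,
            Quaternion.re_star, Quaternion.imI_star, Quaternion.imJ_star, Quaternion.imK_star,
            Quaternion.re_smul, Quaternion.imI_smul, Quaternion.imJ_smul, Quaternion.imK_smul,
            Quaternion.normSq_def', smul_eq_mul, hb, hc, hd] <;> ring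
      · ext <;>
          simp only [Quaternion.re_mul, Quaternion.imI_mul, Quaternion.imJ_mul, Quaternion.imK_mul,
            Quaternion.re_star, Quaternion.imI_star, Quaternion.imJ_star, Quaternion.imK_star,
            Quaternion.re_smul, Quaternion.imI_smul, Quaternion.imJ_smul, Quaternion.imK_smul,
            Quaternion.normSq_def', smul_eq_mul, ha] <;> ring
  · rintro ⟨hb, hc, hd⟩
    have h1 : ∀ X : Quaternion ℝ, A⁻¹ * star X * A = star X := by
      intro X
      have hcomm : star X * A = A * star X := by
        ext <;> simp [Quaternion.re_mul, Quaternion.imI_mul, Quaternion.imJ_mul,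
          Quaternion.imK_mul, hb, hc, hd] <;> ring
      rw [mul_assoc, hcomm, ← mul_assoc, inv_mul_cancel₀ hA, one_mul]
    refine ⟨h1, ℝ ∙ (1 : Quaternion ℝ), ?_, finrank_span_singleton one_ne_zero⟩
    ext X
    simp only [SetLike.mem_coe, Submodule.mem_span_singleton, Set.mem_setOf_eq, h1]
    constructor
    · rintro ⟨r, rfl⟩
      ext <;> simp
    · intro hX
      refine ⟨X.re, ?_⟩
      have := Quaternion.star_eq_self.mp hX
      rw [← Quaternion.coe_one, Quaternion.smul_coe, mul_one, ← this]
  · intro ha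
    have hbcd : A.imI ^ 2 + A.imJ ^ 2 + A.imK ^ 2 ≠ 0 := by
      intro h0
      apply hA
      have hb : A.imI = 0 := pow_eq_zero_iff two_ne_zero |>.mp
        (by nlinarith [sq_nonneg A.imJ, sq_nonneg A.imK])
      have hc : A.imJ = 0 := pow_eq_zero_iff two_ne_zero |>.mp
        (by nlinarith [sq_nonneg A.imI, sq_nonneg A.imK])
      have hd : A.imK = 0 := pow_eq_zero_iff two_ne_zero |>.mp
        (by nlinarith [sq_nonneg A.imI, sq_nonneg A.imJ])
      ext <;> simp [ha, hb, hc, hd, Quaternion.re_zero, Quaternion.imI_zero,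
        Quaternion.imJ_zero, Quaternion.imK_zero]
    let f : Quaternion ℝ →ₗ[ℝ] ℝ :=
      { toFun := fun X => A.imI * X.imI + A.imJ * X.imJ + A.imK * X.imK
        map_add' := by intros; simp; ring
        map_smul' := by intros; simp [smul_eq_mul]; ring }
    refine ⟨LinearMap.ker f, ?_, ?_⟩
    · ext X
      simp only [SetLike.mem_coe, LinearMap.mem_ker, Set.mem_setOf_eq, LinearMap.coe_mk,
        AddHom.coe_mk, cancel, f]
      constructor
      · intro h0
        ext <;> simp [Quaternion.re_mul, Quaternion.imI_mul, Quaternion.imJ_mul,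
          Quaternion.imK_mul, ha] <;> linarith
      · intro h
        have := congrArg QuaternionAlgebra.re h
        simp [Quaternion.re_mul, ha] at this
        linarith
    · have h4 := LinearMap.finrank_range_add_finrank_ker f
      have hsurj : Function.Surjective f := by
        intro r
        refine ⟨(r / (A.imI ^ 2 + A.imJ ^ 2 + A.imK ^ 2)) • A, ?_⟩
        simp only [LinearMap.coe_mk, AddHom.coe_mk, Quaternion.imI_smul, Quaternion.imJ_smul,
          Quaternion.imK_smul, smul_eq_mul, f]
        field_simp
      rw [LinearMap.range_eq_top.mpr hsurj, finrank_top, Quaternion.finrank_eq_four] at h4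
      simp [Module.finrank_self] at h4
      omega
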